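/- Under condition H1, there exist constants c₁, c₂ > 0 such that for all λ ∈ ℝ and all t ∈ (0,1], t ∫_ℝ (cos(λ t^{−1/α} u) − 1) m(u) du ≤ log c₁ − c₂ |λ|^α; equivalently, |exp(ψ_{α,t}(λ))| ≤ c₁ e^{−c₂|λ|^α} for all λ ∈ ℝ and t ∈ (0,1]. -/

import Mathlib

open MeasureTheory Real Filter Set Topology

/-- The characteristic exponent `ψ_{α,t}(λ)` of the rescaled locally stable process. -/
noncomputable def psiT (m : ℝ → ℝ) (α t lam : ℝ) : ℂ :=
  (t : ℂ) * ∫ u : ℝ,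
    (Complex.exp (Complex.I * ((lam * t ^ (-1 / α) * u : ℝ) : ℂ)) - 1 -
      Complex.I * ((lam * t ^ (-1 / α) * u : ℝ) : ℂ) *
        (if |u| ≤ t ^ (1 / α) then (1 : ℂ) else 0)) * ((m u : ℝ) : ℂ)

set_option maxHeartbeats 1000000

lemma one_sub_cos_le_half_sq (x : ℝ) : 1 - Real.cos x ≤ x ^ 2 / 2 := by
  have h := Real.sin_sq_eq_half_sub (x / 2)
  have h2 : 2 * (x / 2) = x := by ring
  rw [h2] at h
  have h3 : Real.sin (x / 2) ^ 2 ≤ (x / 2) ^ 2 := Real.sin_sq_le_sq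
  nlinarith

lemma aux_int {m : ℝ → ℝ} (hm_meas : Measurable m) (hm_nonneg : ∀ u, 0 ≤ m u)
    (hm_int : Integrable (fun u => min 1 (u ^ 2) * m u)) (b : ℝ) :
    Integrable (fun u : ℝ => (1 - Real.cos (b * u)) * m u) := by
  apply (hm_int.const_mul (2 + b ^ 2)).mono
  · exact ((measurable_const.sub
      (Real.measurable_cos.comp (measurable_const_mul b))).mul hm_meas).aestronglyMeasurable
  · refine Eventually.of_forall fun u => ?_
    have hc : Real.cos (b * u) ≤ 1 := Real.cos_le_one _
    have hc2 : -1 ≤ Real.cos (b * u) := Real.neg_one_le_cos _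
    have hm := hm_nonneg u
    rw [Real.norm_eq_abs, Real.norm_eq_abs, abs_of_nonneg (by nlinarith),
      abs_of_nonneg (by positivity)]
    rcases le_or_gt (u ^ 2) 1 with h | h
    · rw [min_eq_right h]
      have hb := one_sub_cos_le_half_sq (b * u)
      nlinarith [mul_nonneg (sq_nonneg u) hm, mul_nonneg (mul_nonneg (sq_nonneg b) (sq_nonneg u)) hm,
        mul_le_mul_of_nonneg_right hb hm]
    · rw [min_eq_left h.le]
      nlinarith [mul_nonneg (sq_nonneg b) hm]

lemma key_big {α C₀ δ : ℝ} (hα0 : 0 < α) (hC₀ : 0 < C₀) (hδ0 : 0 < δ)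
    {M : ℝ → ℝ} (hM_meas : Measurable M) (hM_nonneg : ∀ u, 0 ≤ M u)
    (hM_int : Integrable (fun u => min 1 (u ^ 2) * M u))
    (hmlb : ∀ u ∈ Set.Ioo (0:ℝ) δ, C₀ / 2 ≤ u ^ (α + 1) * M u)
    {b : ℝ} (hb : 2 * π / δ ≤ |b|) :
    C₀ / (4 * π ^ α) * |b| ^ α ≤ ∫ u : ℝ, (1 - Real.cos (b * u)) * M u := by
  set a : ℝ := |b| with hadef
  have ha0 : 0 < a := lt_of_lt_of_le (by positivity) hb
  have hGint : Integrable (fun u : ℝ => (1 - Real.cos (b * u)) * M u) :=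
    aux_int hM_meas hM_nonneg hM_int b
  have hGnn : ∀ u, 0 ≤ (1 - Real.cos (b * u)) * M u := fun u =>
    mul_nonneg (by linarith [Real.cos_le_one (b * u)]) (hM_nonneg u)
  have hIsub : Set.Icc (π / (2 * a)) (π / a) ⊆ Set.Ioo 0 δ := by
    intro u hu
    have h1 : 0 < π / (2 * a) := by positivity
    have h2 : π / a ≤ δ / 2 := by
      rw [div_le_div_iff₀ ha0 two_pos]
      calc π * 2 = 2 * π / δ * δ := by field_simp
        _ ≤ a * δ := mul_le_mul_of_nonneg_right hb hδ0.le
        _ = δ * a := mul_comm _ _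
    exact ⟨lt_of_lt_of_le h1 hu.1, lt_of_le_of_lt (hu.2.trans h2) (by linarith)⟩
  set K : ℝ := C₀ / 2 * (π / a) ^ (-(α + 1)) with hKdef
  have hπa : 0 < π / a := by positivity
  have hK0 : 0 ≤ K := by
    rw [hKdef]
    exact mul_nonneg (by positivity) (Real.rpow_nonneg hπa.le _)
  have hKle : ∀ u ∈ Set.Icc (π / (2 * a)) (π / a), K ≤ (1 - Real.cos (b * u)) * M u := by
    intro u hu
    obtain ⟨hu1, hu2⟩ := hu
    have hu0 : 0 < u := lt_of_lt_of_le (by positivity) hu1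
    have hcos : Real.cos (b * u) ≤ 0 := by
      rw [← Real.cos_abs, abs_mul, abs_of_pos hu0]
      apply Real.cos_nonpos_of_pi_div_two_le_of_le
      · calc π / 2 = a * (π / (2 * a)) := by field_simp
          _ ≤ a * u := mul_le_mul_of_nonneg_left hu1 ha0.le
      · calc a * u ≤ a * (π / a) := mul_le_mul_of_nonneg_left hu2 ha0.le
          _ = π := by field_simp
          _ ≤ π + π / 2 := by linarith [Real.pi_pos]
    have hmu : C₀ / 2 * u ^ (-(α + 1)) ≤ M u := by
      have h := hmlb u (hIsub ⟨hu1, hu2⟩)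
      have hup : (0:ℝ) < u ^ (α + 1) := Real.rpow_pos_of_pos hu0 _
      rw [Real.rpow_neg hu0.le, ← div_eq_mul_inv, div_le_iff₀ hup]
      linarith [h, mul_comm (u ^ (α + 1)) (M u)]
    have hrm : (π / a) ^ (-(α + 1)) ≤ u ^ (-(α + 1)) :=
      Real.rpow_le_rpow_of_nonpos hu0 hu2 (by linarith)
    calc K ≤ C₀ / 2 * u ^ (-(α + 1)) := mul_le_mul_of_nonneg_left hrm (by positivity)
      _ ≤ M u := hmu
      _ = 1 * M u := (one_mul _).symm
      _ ≤ (1 - Real.cos (b * u)) * M u :=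
          mul_le_mul_of_nonneg_right (by linarith) (hM_nonneg u)
  have hdiff : π / a - π / (2 * a) = π / (2 * a) := by field_simp; ring
  have hw : K * (π / (2 * a)) ≤
      ∫ u in Set.Icc (π / (2 * a)) (π / a), (1 - Real.cos (b * u)) * M u := by
    have h1 := setIntegral_ge_of_const_le_real (measurableSet_Icc)
      (by rw [Real.volume_Icc]; exact ENNReal.ofReal_ne_top) hKle hGint.integrableOn
    rwa [Real.volume_real_Icc, hdiff, max_eq_left (by positivity)] at h1
  have hfull : (∫ u in Set.Icc (π / (2 * a)) (π / a), (1 - Real.cos (b * u)) * M u)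
      ≤ ∫ u : ℝ, (1 - Real.cos (b * u)) * M u :=
    setIntegral_le_integral hGint (Eventually.of_forall hGnn)
  have harith : K * (π / (2 * a)) = C₀ / (4 * π ^ α) * a ^ α := by
    have e1 : (π / a) ^ (-(α + 1)) = (π ^ (α + 1) / a ^ (α + 1))⁻¹ := by
      rw [Real.rpow_neg hπa.le, Real.div_rpow Real.pi_pos.le ha0.le]
    have e2 : a ^ (α + 1) = a ^ α * a := Real.rpow_add_one ha0.ne' α
    have e3 : π ^ (α + 1) = π ^ α * π := Real.rpow_add_one Real.pi_ne_zero α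
    have hπα : (0:ℝ) < π ^ α := Real.rpow_pos_of_pos Real.pi_pos α
    have haα : (0:ℝ) < a ^ α := Real.rpow_pos_of_pos ha0 α
    rw [hKdef, e1, e2, e3]
    field_simp
    ring
  calc C₀ / (4 * π ^ α) * a ^ α = K * (π / (2 * a)) := harith.symm
    _ ≤ _ := hw
    _ ≤ _ := hfull

lemma aux_intF {α : ℝ} (hα0 : 0 < α) {m : ℝ → ℝ} (hm_meas : Measurable m)
    (hm_nonneg : ∀ u, 0 ≤ m u)
    (hm_int : Integrable (fun u => min 1 (u ^ 2) * m u)) {t : ℝ}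
    (ht0 : 0 < t) (ht1 : t ≤ 1) (lam : ℝ) :
    Integrable (fun u : ℝ =>
      (Complex.exp (Complex.I * ((lam * t ^ (-1 / α) * u : ℝ) : ℂ)) - 1 -
        Complex.I * ((lam * t ^ (-1 / α) * u : ℝ) : ℂ) *
          (if |u| ≤ t ^ (1 / α) then (1 : ℂ) else 0)) * ((m u : ℝ) : ℂ)) := by
  set s : ℝ := t ^ (-1 / α) with hsdef
  have hs0 : 0 < s := Real.rpow_pos_of_pos ht0 _
  set T : ℝ := t ^ (1 / α) with hTdef
  have hT0 : 0 < T := Real.rpow_pos_of_pos ht0 _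
  have hT1 : T ≤ 1 := Real.rpow_le_one ht0.le ht1 (by positivity)
  set a : ℝ := |lam| * s with hadef
  have ha0 : 0 ≤ a := mul_nonneg (abs_nonneg _) hs0.le
  set C : ℝ := (2 + a) * a ^ 2 + a ^ 2 + 2 + 2 / T ^ 2 with hCdef
  have hC0 : 0 ≤ C := by positivity
  have k1 : (0:ℝ) ≤ (2 + a) * a ^ 2 := by positivity
  have k2 : (0:ℝ) ≤ 2 / T ^ 2 := by positivity
  have k3 : (0:ℝ) ≤ a ^ 2 := sq_nonneg a
  have kC1 : a ^ 2 ≤ C := by rw [hCdef]; linarith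
  have kC2 : (2 + a) * a ^ 2 ≤ C := by rw [hCdef]; linarith
  have kC3 : (2:ℝ) ≤ C := by rw [hCdef]; linarith
  have kC4 : 2 / T ^ 2 ≤ C := by rw [hCdef]; linarith
  apply (hm_int.const_mul C).mono
  · apply Measurable.aestronglyMeasurable
    have h1 : Measurable fun u : ℝ => ((lam * s * u : ℝ) : ℂ) :=
      Complex.measurable_ofReal.comp (measurable_const_mul _)
    have h2 : Measurable fun u : ℝ => (if |u| ≤ T then (1 : ℂ) else 0) :=
      Measurable.ite (measurableSet_le measurable_abs measurable_const)
        measurable_const measurable_const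
    exact ((((Complex.measurable_exp.comp (h1.const_mul Complex.I)).sub
      measurable_const).sub ((h1.const_mul Complex.I).mul h2)).mul
      (Complex.measurable_ofReal.comp hm_meas))
  · refine Eventually.of_forall fun u => ?_
    have hm := hm_nonneg u
    have hmin0 : 0 ≤ min 1 (u ^ 2) * m u := mul_nonneg (le_min zero_le_one (sq_nonneg u)) hm
    rw [norm_mul, Complex.norm_real, Real.norm_eq_abs, abs_of_nonneg hm, Real.norm_eq_abs,
      abs_of_nonneg (mul_nonneg hC0 hmin0)]
    set x : ℝ := lam * s * u with hxdef
    have habsx : |x| = a * |u| := by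
      rw [hxdef, hadef, abs_mul, abs_mul, abs_of_pos hs0]
    have hax : ‖(x : ℂ)‖ = |x| := by rw [Complex.norm_real, Real.norm_eq_abs]
    by_cases h : |u| ≤ T
    · rw [if_pos h]
      have hu1 : |u| ≤ 1 := h.trans hT1
      have hu2 : u ^ 2 ≤ 1 := by nlinarith [abs_nonneg u, sq_abs u]
      have hmin : min 1 (u ^ 2) = u ^ 2 := min_eq_right hu2
      have hxa : |x| ≤ a := by
        rw [habsx]
        calc a * |u| ≤ a * 1 := by nlinarith [abs_nonneg u]
        _ = a := mul_one a
      have hx2 : |x| ^ 2 = a ^ 2 * u ^ 2 := by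
        rw [habsx, mul_pow, sq_abs]
      rw [mul_one]
      have habsIx : ‖Complex.I * (x : ℂ)‖ = |x| := by
        rw [norm_mul, Complex.norm_I, one_mul, hax]
      by_cases hx1 : ‖Complex.I * (x : ℂ)‖ ≤ 1
      · have hb := Complex.norm_exp_sub_one_sub_id_le hx1
        rw [habsIx] at hb
        have : ‖Complex.exp (Complex.I * (x : ℂ)) - 1 - Complex.I * (x : ℂ)‖
            ≤ a ^ 2 * u ^ 2 := by rw [← hx2]; exact hb
        rw [hmin]
        calc ‖Complex.exp (Complex.I * (x : ℂ)) - 1 - Complex.I * (x : ℂ)‖ * m u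
            ≤ (a ^ 2 * u ^ 2) * m u := mul_le_mul_of_nonneg_right this hm
          _ = a ^ 2 * (u ^ 2 * m u) := by ring
          _ ≤ C * (u ^ 2 * m u) :=
              mul_le_mul_of_nonneg_right kC1 (mul_nonneg (sq_nonneg u) hm)
      · push_neg at hx1
        rw [habsIx] at hx1
        have hb : ‖Complex.exp (Complex.I * (x : ℂ)) - 1 - Complex.I * (x : ℂ)‖
            ≤ 2 + a := by
          calc ‖Complex.exp (Complex.I * (x : ℂ)) - 1 - Complex.I * (x : ℂ)‖
              ≤ ‖Complex.exp (Complex.I * (x : ℂ)) - 1‖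
                + ‖Complex.I * (x : ℂ)‖ := by
                  simpa [sub_sub] using norm_sub_le
                    (Complex.exp (Complex.I * (x : ℂ)) - 1) (Complex.I * (x : ℂ))
            _ ≤ (‖Complex.exp (Complex.I * (x : ℂ))‖ + 1) + |x| := by
                  rw [habsIx]
                  gcongr
                  exact (norm_sub_le _ _).trans (by simp)
            _ ≤ (1 + 1) + a := by
                  have : ‖Complex.exp (Complex.I * (x : ℂ))‖ = 1 := by
                    rw [Complex.norm_exp]; simp
                  rw [this]; linarith [hxa]
            _ = 2 + a := by ring
        have hx2' : 1 < a ^ 2 * u ^ 2 := by rw [← hx2]; nlinarith [abs_nonneg x]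
        rw [hmin]
        calc ‖Complex.exp (Complex.I * (x : ℂ)) - 1 - Complex.I * (x : ℂ)‖ * m u
            ≤ (2 + a) * m u := mul_le_mul_of_nonneg_right hb hm
          _ ≤ ((2 + a) * a ^ 2) * (u ^ 2 * m u) := by
              nlinarith [mul_nonneg (mul_nonneg (by linarith : (0:ℝ) ≤ 2 + a) hm)
                (sub_nonneg.mpr hx2'.le)]
          _ ≤ C * (u ^ 2 * m u) :=
              mul_le_mul_of_nonneg_right kC2 (mul_nonneg (sq_nonneg u) hm)
    · rw [if_neg h]
      push_neg at h
      have hb : ‖Complex.exp (Complex.I * (x : ℂ)) - 1 - Complex.I * (x : ℂ) * 0‖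
          ≤ 2 := by
        rw [mul_zero, sub_zero]
        calc ‖Complex.exp (Complex.I * (x : ℂ)) - 1‖
            ≤ ‖Complex.exp (Complex.I * (x : ℂ))‖ + 1 :=
              (norm_sub_le _ _).trans (by simp)
          _ ≤ 2 := by
              have : ‖Complex.exp (Complex.I * (x : ℂ))‖ = 1 := by
                rw [Complex.norm_exp]; simp
              rw [this]; norm_num
      rcases le_or_gt 1 (u ^ 2) with h1 | h1
      · rw [min_eq_left h1]
        calc ‖_‖ * m u ≤ 2 * m u := mul_le_mul_of_nonneg_right hb hm
          _ ≤ C * (1 * m u) := by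
              rw [one_mul]
              exact mul_le_mul_of_nonneg_right kC3 hm
      · rw [min_eq_right h1.le]
        have hT2 : T ^ 2 < u ^ 2 := by nlinarith [abs_nonneg u, sq_abs u]
        have h2T : 2 ≤ 2 / T ^ 2 * u ^ 2 := by
          rw [div_mul_eq_mul_div, le_div_iff₀ (by positivity)]
          nlinarith
        calc ‖_‖ * m u ≤ 2 * m u := mul_le_mul_of_nonneg_right hb hm
          _ ≤ (2 / T ^ 2 * u ^ 2) * m u := mul_le_mul_of_nonneg_right h2T hm
          _ = 2 / T ^ 2 * (u ^ 2 * m u) := by ring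
          _ ≤ C * (u ^ 2 * m u) :=
              mul_le_mul_of_nonneg_right kC4 (mul_nonneg (sq_nonneg u) hm)

lemma psiT_re (m : ℝ → ℝ) (α t lam : ℝ)
    (hF : Integrable (fun u : ℝ =>
      (Complex.exp (Complex.I * ((lam * t ^ (-1 / α) * u : ℝ) : ℂ)) - 1 -
        Complex.I * ((lam * t ^ (-1 / α) * u : ℝ) : ℂ) *
          (if |u| ≤ t ^ (1 / α) then (1 : ℂ) else 0)) * ((m u : ℝ) : ℂ))) :
    (psiT m α t lam).re = t * ∫ u : ℝ, (Real.cos (lam * t ^ (-1 / α) * u) - 1) * m u := by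
  unfold psiT
  rw [Complex.mul_re]
  simp only [Complex.ofReal_re, Complex.ofReal_im, zero_mul, sub_zero]
  congr 1
  rw [← RCLike.re_to_complex, ← integral_re hF]
  congr 1
  funext u
  by_cases h : |u| ≤ t ^ (1 / α)
  · rw [if_pos h]
    simp [Complex.mul_re, Complex.mul_im, Complex.exp_re, Complex.exp_im]
  · rw [if_neg h]
    simp [Complex.mul_re, Complex.mul_im, Complex.exp_re, Complex.exp_im]



/-- Under condition H1, there exist `c₁, c₂ > 0` such that for all `λ ∈ ℝ` and `t ∈ (0,1]`,
`t ∫ (cos(λ t^{-1/α} u) - 1) m(u) du ≤ log c₁ - c₂ |λ|^α`; equivalently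
`|exp (ψ_{α,t}(λ))| ≤ c₁ exp (-c₂ |λ|^α)`. -/
theorem statement3 (α Cp Cm : ℝ) (hα : α ∈ Set.Ioo (0 : ℝ) 2)
    (hCp0 : 0 ≤ Cp) (hCm0 : 0 ≤ Cm) (hC : 0 < Cp + Cm)
    (m : ℝ → ℝ) (hm_meas : Measurable m) (hm_nonneg : ∀ u, 0 ≤ m u)
    (hm_int : Integrable (fun u => min 1 (u ^ 2) * m u))
    (hlimp : Tendsto (fun u => u ^ (α + 1) * m u) (𝓝[>] (0 : ℝ)) (𝓝 Cp))
    (hlimm : Tendsto (fun u => |u| ^ (α + 1) * m u) (𝓝[<] (0 : ℝ)) (𝓝 Cm)) :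
    ∃ c₁ > (0 : ℝ), ∃ c₂ > (0 : ℝ), ∀ lam : ℝ, ∀ t ∈ Set.Ioc (0 : ℝ) 1,
      (t * ∫ u : ℝ, (Real.cos (lam * t ^ (-1 / α) * u) - 1) * m u
          ≤ Real.log c₁ - c₂ * |lam| ^ α) ∧
      ‖Complex.exp (psiT m α t lam)‖ ≤ c₁ * Real.exp (-c₂ * |lam| ^ α) := by
  obtain ⟨hα0, hα2⟩ := hα
  -- reduce to a one-sided bound for a reflected density M
  set C₀ : ℝ := if 0 < Cp then Cp else Cm with hC₀def
  set M : ℝ → ℝ := if 0 < Cp then m else (fun u => m (-u)) with hMdef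
  have hC₀ : 0 < C₀ := by
    by_cases h : 0 < Cp
    · simpa [hC₀def, h] using h
    · have hCp : Cp = 0 := le_antisymm (not_lt.mp h) hCp0
      rw [hC₀def, if_neg h]; linarith
  have hM_nonneg : ∀ u, 0 ≤ M u := by
    intro u; by_cases h : 0 < Cp <;> simp [hMdef, h, hm_nonneg]
  have hM_meas : Measurable M := by
    by_cases h : 0 < Cp
    · rw [hMdef, if_pos h]; exact hm_meas
    · rw [hMdef, if_neg h]; exact hm_meas.comp measurable_neg
  have hM_int : Integrable (fun u => min 1 (u ^ 2) * M u) := by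
    by_cases h : 0 < Cp
    · rw [hMdef, if_pos h]; exact hm_int
    · rw [hMdef, if_neg h]
      have h2 := hm_int.comp_neg
      apply h2.congr
      refine Eventually.of_forall fun u => ?_
      simp [neg_sq]
  have hM_lim : Tendsto (fun u => u ^ (α + 1) * M u) (𝓝[>] (0:ℝ)) (𝓝 C₀) := by
    by_cases h : 0 < Cp
    · rw [hMdef, if_pos h, hC₀def, if_pos h]; exact hlimp
    · rw [hMdef, if_neg h, hC₀def, if_neg h]
      have hneg : Tendsto (fun u : ℝ => -u) (𝓝[>] (0:ℝ)) (𝓝[<] (0:ℝ)) := by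
        apply tendsto_nhdsWithin_of_tendsto_nhds_of_eventually_within
        · have h0 : Tendsto (fun u : ℝ => -u) (𝓝 (0:ℝ)) (𝓝 (0:ℝ)) := by
            simpa using continuous_neg.tendsto (0:ℝ)
          exact h0.mono_left nhdsWithin_le_nhds
        · filter_upwards [self_mem_nhdsWithin] with u hu
          simpa using hu
      have h2 := hlimm.comp hneg
      apply h2.congr'
      filter_upwards [self_mem_nhdsWithin] with u hu
      simp only [Function.comp_apply, abs_neg, abs_of_pos (mem_Ioi.mp hu)]
  -- extract δ
  have hev : ∀ᶠ u in 𝓝[>] (0:ℝ), C₀ / 2 < u ^ (α + 1) * M u :=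
    hM_lim.eventually_const_lt (by linarith)
  obtain ⟨ε, hε, hδsub⟩ := mem_nhdsGT_iff_exists_Ioo_subset.mp hev
  have hε0 : (0:ℝ) < ε := hε
  set δ : ℝ := min ε 1 with hδdef
  have hδ0 : 0 < δ := lt_min hε0 one_pos
  have hmlb : ∀ u ∈ Set.Ioo (0:ℝ) δ, C₀ / 2 ≤ u ^ (α + 1) * M u := fun u hu =>
    le_of_lt (hδsub ⟨hu.1, lt_of_lt_of_le hu.2 (min_le_left _ _)⟩)
  -- constants
  have hπα : (0:ℝ) < π ^ α := Real.rpow_pos_of_pos Real.pi_pos α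
  set c₂ : ℝ := C₀ / (4 * π ^ α) with hc₂def
  have hc₂ : 0 < c₂ := div_pos hC₀ (by positivity)
  set lam₀ : ℝ := 2 * π / δ with hlam₀def
  have hlam₀ : 0 < lam₀ := by rw [hlam₀def]; positivity
  set c₁ : ℝ := Real.exp (c₂ * lam₀ ^ α) with hc₁def
  have hc₁ : 0 < c₁ := Real.exp_pos _
  have hlogc₁ : Real.log c₁ = c₂ * lam₀ ^ α := Real.log_exp _
  have hlogc₁nn : 0 ≤ Real.log c₁ := by
    rw [hlogc₁]
    exact mul_nonneg hc₂.le (Real.rpow_nonneg hlam₀.le _)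
  refine ⟨c₁, hc₁, c₂, hc₂, fun lam t ht => ?_⟩
  obtain ⟨ht0, ht1⟩ := ht
  have hs0 : (0:ℝ) < t ^ (-1 / α) := Real.rpow_pos_of_pos ht0 _
  have hs1 : (1:ℝ) ≤ t ^ (-1 / α) :=
    Real.one_le_rpow_of_pos_of_le_one_of_nonpos ht0 ht1
      (by rw [neg_div]; exact neg_nonpos.mpr (by positivity))
  -- the key real inequality
  have key : t * ∫ u : ℝ, (Real.cos (lam * t ^ (-1 / α) * u) - 1) * m u
      ≤ Real.log c₁ - c₂ * |lam| ^ α := by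
    rcases le_or_gt |lam| lam₀ with hsmall | hbig
    · have h1 : (∫ u : ℝ, (Real.cos (lam * t ^ (-1 / α) * u) - 1) * m u) ≤ 0 :=
        integral_nonpos fun u =>
          mul_nonpos_of_nonpos_of_nonneg
            (by linarith [Real.cos_le_one (lam * t ^ (-1 / α) * u)]) (hm_nonneg u)
      have h2 : c₂ * |lam| ^ α ≤ Real.log c₁ := by
        rw [hlogc₁]
        exact mul_le_mul_of_nonneg_left
          (Real.rpow_le_rpow (abs_nonneg _) hsmall hα0.le) hc₂.le
      have h3 : t * (∫ u : ℝ, (Real.cos (lam * t ^ (-1 / α) * u) - 1) * m u) ≤ t * 0 :=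
        mul_le_mul_of_nonneg_left h1 ht0.le
      rw [mul_zero] at h3
      linarith
    · -- big |lam|
      set b : ℝ := lam * t ^ (-1 / α) with hbdef
      have habsb : |b| = |lam| * t ^ (-1 / α) := by
        rw [hbdef, abs_mul, abs_of_pos hs0]
      have hblb : 2 * π / δ ≤ |b| := by
        rw [habsb]
        calc 2 * π / δ = lam₀ := rfl
          _ ≤ |lam| := hbig.le
          _ = |lam| * 1 := (mul_one _).symm
          _ ≤ |lam| * t ^ (-1 / α) := mul_le_mul_of_nonneg_left hs1 (abs_nonneg _)
      have hkb := key_big hα0 hC₀ hδ0 hM_meas hM_nonneg hM_int hmlb hblb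
      -- convert m to M in the integral
      have hMint_eq : (∫ u : ℝ, (1 - Real.cos (b * u)) * m u)
          = ∫ u : ℝ, (1 - Real.cos (b * u)) * M u := by
        by_cases h : 0 < Cp
        · rw [hMdef, if_pos h]
        · rw [hMdef, if_neg h]
          calc (∫ u : ℝ, (1 - Real.cos (b * u)) * m u)
              = ∫ u : ℝ, (1 - Real.cos (b * -u)) * m (-u) := by
                rw [← integral_neg_eq_self (fun u : ℝ => (1 - Real.cos (b * u)) * m u) volume]
            _ = ∫ u : ℝ, (1 - Real.cos (b * u)) * m (-u) := by
                congr 1; funext u; rw [mul_neg, Real.cos_neg]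
      -- scaling: t * |b|^α = |lam|^α
      have hta : t * |b| ^ α = |lam| ^ α := by
        rw [habsb, Real.mul_rpow (abs_nonneg _) hs0.le, ← Real.rpow_mul ht0.le]
        have he : -1 / α * α = -1 := by field_simp
        rw [he, Real.rpow_neg_one, mul_comm (|lam| ^ α) t⁻¹, ← mul_assoc,
          mul_inv_cancel₀ ht0.ne', one_mul]
      have h4 : c₂ * |lam| ^ α ≤ t * ∫ u : ℝ, (1 - Real.cos (b * u)) * m u := by
        rw [hMint_eq, ← hta]
        have h5 : t * (C₀ / (4 * π ^ α) * |b| ^ α)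
            ≤ t * ∫ u : ℝ, (1 - Real.cos (b * u)) * M u :=
          mul_le_mul_of_nonneg_left hkb ht0.le
        calc c₂ * (t * |b| ^ α) = t * (C₀ / (4 * π ^ α) * |b| ^ α) := by
              rw [hc₂def]; ring
          _ ≤ _ := h5
      have h5 : (∫ u : ℝ, (Real.cos (b * u) - 1) * m u)
          = - ∫ u : ℝ, (1 - Real.cos (b * u)) * m u := by
        rw [← integral_neg]
        congr 1; funext u; ring
      rw [h5, mul_neg]
      linarith
  constructor
  · exact key
  · have hF := aux_intF hα0 hm_meas hm_nonneg hm_int ht0 ht1 lam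
    have hre := psiT_re m α t lam hF
    calc ‖Complex.exp (psiT m α t lam)‖
        = Real.exp (psiT m α t lam).re := Complex.norm_exp _
      _ ≤ Real.exp (Real.log c₁ - c₂ * |lam| ^ α) := Real.exp_le_exp.mpr (by rw [hre]; exact key)
      _ = c₁ * Real.exp (-(c₂ * |lam| ^ α)) := by
          rw [sub_eq_add_neg, Real.exp_add, Real.exp_log hc₁]
      _ = c₁ * Real.exp (-c₂ * |lam| ^ α) := by rw [neg_mul]
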